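/- arXiv:1707.06727 — 8 statements merged into one kernel-verified Lean document; each statement's English description precedes it below -/
import Mathlib

section
/- The collection of partial transversals of a finite set system forms the independent sets of a matroid. Precisely: given a finite set S and a finite family 𝒜 = (A_1, …, A_m) of subsets of S, there is a matroid on ground set S whose independent sets are exactly the partial transversals of 𝒜; equivalently, the collection of partial transversals is nonempty, downward closed, and satisfies the augmentation (independence exchange) property: if I and J are partial transversals with |I| < |J|, then there exists x ∈ J \ I such that I ∪ {x} is a partial transversal. -/
/-- `I` is a partial transversal of the set system `A : Fin m → Finset (Fin n)`:
there is an injection `φ` from `I` into the index set with `x ∈ A (φ x)` for all `x ∈ I`. -/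
def IsPartialTransversal {n m : ℕ} (A : Fin m → Finset (Fin n)) (I : Finset (Fin n)) : Prop :=
  ∃ φ : I → Fin m, Function.Injective φ ∧ ∀ x : I, (x : Fin n) ∈ A (φ x)

namespace TransversalAux

variable {n m : ℕ} (A : Fin m → Finset (Fin n))

/-- Neighbours of a single element. -/
def nbx (x : Fin n) : Finset (Fin m) := Finset.univ.filter (fun j => x ∈ A j)

/-- Neighbours of a set. -/
def nb (S : Finset (Fin n)) : Finset (Fin m) := S.biUnion (nbx A)

variable {A}

lemma nb_mono {S T : Finset (Fin n)} (h : S ⊆ T) : nb A S ⊆ nb A T :=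
  Finset.biUnion_subset_biUnion_of_subset_left _ h

lemma nb_union (S T : Finset (Fin n)) : nb A (S ∪ T) = nb A S ∪ nb A T := by
  ext j
  simp [nb, Finset.mem_biUnion, Finset.mem_union, or_and_right, exists_or]

lemma nbx_subset_nb {x : Fin n} {S : Finset (Fin n)} (h : x ∈ S) : nbx A x ⊆ nb A S :=
  Finset.subset_biUnion_of_mem _ h

/-- Hall's condition characterizes partial transversals. -/
lemma hall_iff (I : Finset (Fin n)) :
    IsPartialTransversal A I ↔ ∀ S ⊆ I, S.card ≤ (nb A S).card := by
  have H := Finset.all_card_le_biUnion_card_iff_exists_injective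
    (fun x : I => nbx A (x : Fin n))
  constructor
  · rintro ⟨φ, hinj, hmem⟩ S hS
    have h := H.2 ⟨φ, hinj, fun x => by
      simpa [nbx] using hmem x⟩
    -- transfer: take the attached version of S
    have hs := h (S.attach.map ⟨fun x => (⟨x.1, hS x.2⟩ : I), by
      intro a b hab
      have hv := congrArg Subtype.val hab
      exact Subtype.ext hv⟩)
    rw [Finset.card_map, Finset.card_attach] at hs
    refine hs.trans (Finset.card_le_card ?_)
    intro j hj
    simp only [Finset.mem_biUnion, Finset.mem_map, Finset.mem_attach,
      Function.Embedding.coeFn_mk, true_and] at hj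
    obtain ⟨x, ⟨a, ha⟩, hx⟩ := hj
    subst ha
    exact Finset.mem_biUnion.2 ⟨a.1, a.2, hx⟩
  · intro h
    obtain ⟨f, hinj, hf⟩ := H.1 (by
      intro s
      have hsub : (s.image Subtype.val) ⊆ I := by
        intro x hx
        obtain ⟨a, _, rfl⟩ := Finset.mem_image.1 hx
        exact a.2
      have := h _ hsub
      rw [Finset.card_image_of_injective _ Subtype.val_injective] at this
      refine this.trans (Finset.card_le_card ?_)
      intro j hj
      simp only [nb, Finset.mem_biUnion, Finset.mem_image] at hj ⊢
      obtain ⟨x, ⟨a, ha, rfl⟩, hx⟩ := hj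
      exact ⟨a, ha, hx⟩)
    exact ⟨f, hinj, fun x => by simpa [nbx] using hf x⟩

lemma tight_union {I T₁ T₂ : Finset (Fin n)}
    (hI : ∀ S ⊆ I, S.card ≤ (nb A S).card)
    (h₁ : T₁ ⊆ I) (h₂ : T₂ ⊆ I)
    (c₁ : (nb A T₁).card = T₁.card) (c₂ : (nb A T₂).card = T₂.card) :
    (nb A (T₁ ∪ T₂)).card = (T₁ ∪ T₂).card := by
  have hsub : T₁ ∪ T₂ ⊆ I := Finset.union_subset h₁ h₂
  have hge := hI _ hsub
  have hinter := hI (T₁ ∩ T₂) (Finset.Subset.trans Finset.inter_subset_left h₁)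
  have hni : nb A (T₁ ∩ T₂) ⊆ nb A T₁ ∩ nb A T₂ :=
    Finset.subset_inter (nb_mono Finset.inter_subset_left)
      (nb_mono Finset.inter_subset_right)
  have e1 : (nb A T₁ ∪ nb A T₂).card + (nb A T₁ ∩ nb A T₂).card
      = (nb A T₁).card + (nb A T₂).card := Finset.card_union_add_card_inter _ _
  have e2 : (T₁ ∪ T₂).card + (T₁ ∩ T₂).card = T₁.card + T₂.card :=
    Finset.card_union_add_card_inter _ _
  have e3 : (nb A (T₁ ∪ T₂)).card = (nb A T₁ ∪ nb A T₂).card := by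
    rw [nb_union]
  have e4 : (nb A (T₁ ∩ T₂)).card ≤ (nb A T₁ ∩ nb A T₂).card :=
    Finset.card_le_card hni
  omega

lemma tight_biUnion {I : Finset (Fin n)} (hI : ∀ S ⊆ I, S.card ≤ (nb A S).card)
    {β : Type*} [DecidableEq β] (s : Finset β) (g : β → Finset (Fin n))
    (hsub : ∀ x ∈ s, g x ⊆ I) (htight : ∀ x ∈ s, (nb A (g x)).card = (g x).card) :
    (s.biUnion g) ⊆ I ∧ (nb A (s.biUnion g)).card = (s.biUnion g).card := by
  classical
  induction s using Finset.induction_on with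
  | empty => simp [nb]
  | @insert a s hx ih =>
    obtain ⟨ih1, ih2⟩ := ih (fun x hx => hsub x (Finset.mem_insert_of_mem hx))
      (fun x hx => htight x (Finset.mem_insert_of_mem hx))
    rw [Finset.biUnion_insert]
    refine ⟨Finset.union_subset (hsub a (Finset.mem_insert_self _ _)) ih1, ?_⟩
    exact tight_union hI (hsub a (Finset.mem_insert_self _ _)) ih1
      (htight a (Finset.mem_insert_self _ _)) ih2

/-- The augmentation property. -/
lemma aug {I J : Finset (Fin n)} (hIt : IsPartialTransversal A I)
    (hJt : IsPartialTransversal A J) (hcard : I.card < J.card) :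
    ∃ x ∈ J \ I, IsPartialTransversal A (insert x I) := by
  classical
  rw [hall_iff] at hIt hJt
  by_contra hcon
  push_neg at hcon
  -- for each x in J \ I, extract a tight set
  have key : ∀ x : Fin n, x ∈ J \ I →
      ∃ T, T ⊆ I ∧ (nb A T).card = T.card ∧ nbx A x ⊆ nb A T := by
    intro x hx
    have hni := hcon x hx
    rw [hall_iff] at hni
    push_neg at hni
    obtain ⟨S, hS, hSc⟩ := hni
    have hxS : x ∈ S := by
      by_contra hxS
      have : S ⊆ I := fun y hy => (Finset.mem_insert.1 (hS hy)).elim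
        (fun h => absurd (h ▸ hy) hxS) id
      exact absurd (hIt S this) (not_le.2 hSc)
    set T := S.erase x with hT
    have hTI : T ⊆ I := by
      intro y hy
      have hyS := Finset.mem_of_mem_erase hy
      have hyx := Finset.ne_of_mem_erase hy
      exact (Finset.mem_insert.1 (hS hyS)).elim (fun h => absurd h hyx) id
    have hScard : S.card = T.card + 1 := by
      rw [hT, Finset.card_erase_of_mem hxS]
      have : 1 ≤ S.card := Finset.card_pos.2 ⟨x, hxS⟩
      omega
    have hTS : nb A T ⊆ nb A S := nb_mono (Finset.erase_subset _ _)
    have h1 : T.card ≤ (nb A T).card := hIt T hTI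
    have h2 : (nb A S).card ≤ T.card := by omega
    have heq : nb A T = nb A S :=
      Finset.eq_of_subset_of_card_le hTS (by omega)
    refine ⟨T, hTI, by rw [heq] at h1 ⊢; omega, ?_⟩
    rw [heq]
    exact nbx_subset_nb hxS
  choose g hg1 hg2 hg3 using key
  set T := (J \ I).attach.biUnion (fun x => g x.1 x.2) with hTdef
  obtain ⟨hTI, hTtight⟩ := tight_biUnion hIt (J \ I).attach (fun x => g x.1 x.2)
    (fun x _ => hg1 x.1 x.2) (fun x _ => hg2 x.1 x.2)
  rw [← hTdef] at hTI hTtight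
  have hnbJI : ∀ x ∈ J \ I, nbx A x ⊆ nb A T := by
    intro x hx
    refine (hg3 x hx).trans (nb_mono ?_)
    rw [hTdef]
    exact Finset.subset_biUnion_of_mem (fun y => g y.1 y.2) (Finset.mem_attach _ ⟨x, hx⟩)
  -- the subset of J
  have hJ'' : (J \ I) ∪ (J ∩ T) ⊆ J :=
    Finset.union_subset Finset.sdiff_subset Finset.inter_subset_left
  have h1 : ((J \ I) ∪ (J ∩ T)).card ≤ (nb A ((J \ I) ∪ (J ∩ T))).card := hJt _ hJ''
  have h2 : nb A ((J \ I) ∪ (J ∩ T)) ⊆ nb A T := by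
    rw [nb_union]
    refine Finset.union_subset ?_ (nb_mono Finset.inter_subset_right)
    intro j hj
    obtain ⟨x, hx, hxj⟩ := Finset.mem_biUnion.1 hj
    exact hnbJI x hx hxj
  have hdisj : Disjoint (J \ I) (J ∩ T) := by
    refine Finset.disjoint_left.2 fun x hx hx' => ?_
    exact (Finset.mem_sdiff.1 hx).2 (hTI (Finset.mem_inter.1 hx').2)
  have h3 : ((J \ I) ∪ (J ∩ T)).card = (J \ I).card + (J ∩ T).card :=
    Finset.card_union_of_disjoint hdisj
  have h4 : (T ∩ J).card + (T \ J).card = T.card :=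
    Finset.card_inter_add_card_sdiff _ _
  have h5 : (J ∩ T).card = (T ∩ J).card := by rw [Finset.inter_comm]
  have h6 : (T \ J).card ≤ (I \ J).card :=
    Finset.card_le_card (Finset.sdiff_subset_sdiff hTI (le_refl _))
  have h7 : (J ∩ I).card + (J \ I).card = J.card :=
    Finset.card_inter_add_card_sdiff _ _
  have h8 : (I ∩ J).card + (I \ J).card = I.card :=
    Finset.card_inter_add_card_sdiff _ _
  have h9 : (J ∩ I).card = (I ∩ J).card := by rw [Finset.inter_comm]
  have h10 : (nb A ((J \ I) ∪ (J ∩ T))).card ≤ (nb A T).card := Finset.card_le_card h2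
  omega

end TransversalAux

open TransversalAux in
/-- The partial transversals of a finite set system form the independent sets of a matroid:
there is a matroid on the ground set whose independent sets are exactly the partial
transversals; equivalently, the collection of partial transversals is nonempty
(contains `∅`), downward closed, and satisfies the augmentation property. -/
theorem transversal_matroid_exists (n m : ℕ) (A : Fin m → Finset (Fin n)) :
    (∃ M : Matroid (Fin n), M.E = Set.univ ∧
      ∀ I : Finset (Fin n), M.Indep ↑I ↔ IsPartialTransversal A I) ∧
    IsPartialTransversal A ∅ ∧
    (∀ I J : Finset (Fin n), IsPartialTransversal A J → I ⊆ J →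
      IsPartialTransversal A I) ∧
    (∀ I J : Finset (Fin n), IsPartialTransversal A I → IsPartialTransversal A J →
      I.card < J.card → ∃ x ∈ J \ I, IsPartialTransversal A (insert x I)) := by
  classical
  have hempty : IsPartialTransversal A ∅ :=
    ⟨fun x => absurd x.2 (Finset.notMem_empty _), fun a b h =>
      absurd a.2 (Finset.notMem_empty _), fun x => absurd x.2 (Finset.notMem_empty _)⟩
  have hsubset : ∀ ⦃I J : Finset (Fin n)⦄, IsPartialTransversal A J → I ⊆ J →
      IsPartialTransversal A I := by
    intro I J hJ hIJ
    rw [hall_iff] at hJ ⊢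
    exact fun S hS => hJ S (hS.trans hIJ)
  have haug : ∀ ⦃I J : Finset (Fin n)⦄, IsPartialTransversal A I →
      IsPartialTransversal A J → I.card < J.card →
      ∃ e ∈ J, e ∉ I ∧ IsPartialTransversal A (insert e I) := by
    intro I J hI hJ hc
    obtain ⟨x, hx, hins⟩ := aug hI hJ hc
    obtain ⟨hxJ, hxI⟩ := Finset.mem_sdiff.1 hx
    exact ⟨x, hxJ, hxI, hins⟩
  refine ⟨⟨(IndepMatroid.ofFinset Set.univ (IsPartialTransversal A) hempty hsubset haug
      (fun I _ => Set.subset_univ _)).matroid, ?_, ?_⟩, hempty,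
      fun I J hJ h => hsubset hJ h, fun I J hI hJ hc => aug hI hJ hc⟩
  · simp [IndepMatroid.ofFinset_E]
  · intro I
    rw [IndepMatroid.matroid_indep_iff, IndepMatroid.ofFinset_indep]
end

section
/- All maximal partial transversals of a finite set system have the same cardinality. Precisely: given a finite set S and a finite family 𝒜 = (A_1, …, A_m) of subsets of S, if I and J are partial transversals of 𝒜 each of which is maximal with respect to inclusion among partial transversals, then |I| = |J|. -/
namespace MPTaux

/-- iterate a partial function -/
def iter {n : ℕ} (st : Fin n → Option (Fin n)) : ℕ → Fin n → Option (Fin n)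
  | 0, x => some x
  | k+1, x => (iter st k x).bind st

lemma iter_inj {n : ℕ} (st : Fin n → Option (Fin n))
    (hinj : ∀ x y z, st x = some z → st y = some z → x = y)
    (S : Set (Fin n)) (hS : ∀ x z, st x = some z → z ∉ S) :
    ∀ a b x y z, x ∈ S → y ∈ S → iter st a x = some z → iter st b y = some z →
      a = b ∧ x = y := by
  intro a
  induction a with
  | zero =>
    intro b x y z hx hy ha hb
    simp only [iter] at ha
    cases b with
    | zero =>
      simp only [iter] at hb
      refine ⟨rfl, ?_⟩
      rw [← Option.some_inj, ha, hb]
    | succ b =>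
      simp only [iter] at hb
      obtain ⟨w, hw1, hw2⟩ := Option.bind_eq_some_iff.mp hb
      exact absurd (Option.some_inj.mp ha ▸ hx) (hS w z hw2)
  | succ a ih =>
    intro b x y z hx hy ha hb
    cases b with
    | zero =>
      simp only [iter] at hb ha
      obtain ⟨w, hw1, hw2⟩ := Option.bind_eq_some_iff.mp ha
      exact absurd (Option.some_inj.mp hb ▸ hy) (hS w z hw2)
    | succ b =>
      simp only [iter] at ha hb
      obtain ⟨w, hw1, hw2⟩ := Option.bind_eq_some_iff.mp ha
      obtain ⟨w', hw'1, hw'2⟩ := Option.bind_eq_some_iff.mp hb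
      have hww : w = w' := hinj w w' z hw2 hw'2
      subst hww
      obtain ⟨h1, h2⟩ := ih b x y w hx hy hw1 hw'1
      exact ⟨by omega, h2⟩

lemma iter_none_le {n : ℕ} (st : Fin n → Option (Fin n)) {x : Fin n} {a b : ℕ}
    (h : iter st a x = none) (hab : a ≤ b) : iter st b x = none := by
  induction b with
  | zero =>
    have : a = 0 := by omega
    exact this ▸ h
  | succ b ih =>
    by_cases hb : a = b + 1
    · exact hb ▸ h
    · have : iter st b x = none := ih (by omega)
      simp [iter, this]

lemma iter_terminates {n : ℕ} (st : Fin n → Option (Fin n))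
    (hinj : ∀ x y z, st x = some z → st y = some z → x = y)
    (x : Fin n) (hx : ∀ w z, st w = some z → z ≠ x) :
    ∃ k, iter st k x = none := by
  by_contra h
  push_neg at h
  have hsome : ∀ k, ∃ z, iter st k x = some z := by
    intro k
    rcases ho : iter st k x with _ | z
    · exact absurd ho (h k)
    · exact ⟨z, rfl⟩
  choose F hF using hsome
  have hFi : Function.Injective F := by
    intro a b hab
    exact (iter_inj st hinj {x} (fun w z hwz hz => hx w z hwz (Set.mem_singleton_iff.mp hz))
      a b x x (F a) rfl rfl (hF a) (hab ▸ hF b)).1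
  obtain ⟨a, b, hne, heq⟩ := Finite.exists_ne_map_eq_of_infinite F
  exact hne (hFi heq)

/-- pack a function-form matching into a partial transversal -/
lemma pack {n m : ℕ} (A : Fin m → Finset (Fin n)) (K : Finset (Fin n))
    (f' : Fin n → Option (Fin m))
    (h1 : ∀ y ∈ K, ∃ j, f' y = some j)
    (h2 : ∀ y j, f' y = some j → y ∈ A j)
    (h3 : ∀ y₁ y₂ j, f' y₁ = some j → f' y₂ = some j → y₁ = y₂) :
    IsPartialTransversal A K := by
  choose Φ hΦ using h1
  refine ⟨fun y => Φ y y.2, ?_, ?_⟩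
  · intro y₁ y₂ hEq
    have hEq' : Φ (y₁ : Fin n) y₁.2 = Φ (y₂ : Fin n) y₂.2 := hEq
    exact Subtype.ext (h3 y₁ y₂ _ (hΦ y₁ y₁.2) (hEq' ▸ hΦ y₂ y₂.2))
  · intro y
    exact h2 y _ (hΦ y y.2)

end MPTaux

open MPTaux in
/-- If `I` is a maximal partial transversal and `J` is any partial transversal,
then `J.card ≤ I.card`. -/
theorem card_le_of_maximal_pt {n m : ℕ} (A : Fin m → Finset (Fin n))
    (I J : Finset (Fin n))
    (hI : IsPartialTransversal A I) (hJ : IsPartialTransversal A J)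
    (hImax : ∀ I' : Finset (Fin n), IsPartialTransversal A I' → I ⊆ I' → I = I') :
    J.card ≤ I.card := by
  classical
  obtain ⟨φ, hφinj, hφmem⟩ := hI
  obtain ⟨ψ, hψinj, hψmem⟩ := hJ
  set f : Fin n → Option (Fin m) := fun x => if h : x ∈ I then some (φ ⟨x, h⟩) else none with hf
  set g : Fin n → Option (Fin m) := fun x => if h : x ∈ J then some (ψ ⟨x, h⟩) else none with hg
  have hf1 : ∀ x j, f x = some j → x ∈ I ∧ x ∈ A j := by
    intro x j hxj
    simp only [hf] at hxj
    split_ifs at hxj with h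
    exact ⟨h, by rw [← Option.some_inj.mp hxj]; exact hφmem ⟨x, h⟩⟩
  have hf2 : ∀ x, x ∈ I → ∃ j, f x = some j := by
    intro x hx; exact ⟨φ ⟨x, hx⟩, by simp [hf, hx]⟩
  have hf3 : ∀ x y j, f x = some j → f y = some j → x = y := by
    intro x y j hxj hyj
    simp only [hf] at hxj hyj
    split_ifs at hxj hyj with h1 h2
    have := hφinj (a₁ := ⟨x, h1⟩) (a₂ := ⟨y, h2⟩)
      (by rw [Option.some_inj.mp hxj, Option.some_inj.mp hyj])
    exact Subtype.ext_iff.mp this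
  have hg1 : ∀ x j, g x = some j → x ∈ J ∧ x ∈ A j := by
    intro x j hxj
    simp only [hg] at hxj
    split_ifs at hxj with h
    exact ⟨h, by rw [← Option.some_inj.mp hxj]; exact hψmem ⟨x, h⟩⟩
  have hg2 : ∀ x, x ∈ J → ∃ j, g x = some j := by
    intro x hx; exact ⟨ψ ⟨x, hx⟩, by simp [hg, hx]⟩
  have hg3 : ∀ x y j, g x = some j → g y = some j → x = y := by
    intro x y j hxj hyj
    simp only [hg] at hxj hyj
    split_ifs at hxj hyj with h1 h2
    have := hψinj (a₁ := ⟨x, h1⟩) (a₂ := ⟨y, h2⟩)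
      (by rw [Option.some_inj.mp hxj, Option.some_inj.mp hyj])
    exact Subtype.ext_iff.mp this
  -- the partial inverse of f
  set finv : Fin m → Option (Fin n) :=
    fun j => if h : ∃ y, f y = some j then some h.choose else none with hfinv
  have hfinv1 : ∀ j y, finv j = some y → f y = some j := by
    intro j y hjy
    simp only [hfinv] at hjy
    split_ifs at hjy with h
    rw [← Option.some_inj.mp hjy]; exact h.choose_spec
  have hfinv2 : ∀ j, finv j = none → ¬ ∃ y, f y = some j := by
    intro j hj
    simp only [hfinv] at hj
    split_ifs at hj with h
    exact h
  -- alternating step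
  set st : Fin n → Option (Fin n) := fun x => (g x).bind finv with hst
  have hst1 : ∀ x y, st x = some y → ∃ j, g x = some j ∧ f y = some j := by
    intro x y hxy
    obtain ⟨j, hj1, hj2⟩ := Option.bind_eq_some_iff.mp hxy
    exact ⟨j, hj1, hfinv1 j y hj2⟩
  have hstinj : ∀ x y z, st x = some z → st y = some z → x = y := by
    intro x y z hxz hyz
    obtain ⟨j1, hj1, hj1'⟩ := hst1 x z hxz
    obtain ⟨j2, hj2, hj2'⟩ := hst1 y z hyz
    have : j1 = j2 := by rw [← Option.some_inj, ← hj1', ← hj2']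
    exact hg3 x y j1 hj1 (this ▸ hj2)
  have hstI : ∀ x z, st x = some z → z ∈ I := by
    intro x z hxz
    obtain ⟨j, _, hj⟩ := hst1 x z hxz
    exact (hf1 z j hj).1
  have hSrange : ∀ x z, st x = some z → z ∉ (↑(J \ I) : Set (Fin n)) := by
    intro x z hxz hz
    simp only [Finset.coe_sdiff, Set.mem_diff, Finset.mem_coe] at hz
    exact hz.2 (hstI x z hxz)
  -- every alternating path starting in J \ I ends in I \ J
  have hEx : ∀ x0 ∈ J \ I, ∃ y, y ∈ I \ J ∧ ∃ k, iter st k x0 = some y := by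
    intro x0 hx0
    obtain ⟨hx0J, hx0I⟩ := Finset.mem_sdiff.mp hx0
    have hterm : ∃ k, iter st k x0 = none :=
      iter_terminates st hstinj x0 (fun w z hwz hz => hx0I (hz ▸ hstI w z hwz))
    set N := Nat.find hterm with hN
    have hN0 : N ≠ 0 := by
      intro h
      have := Nat.find_spec hterm
      rw [← hN, h] at this
      simp [iter] at this
    have hNm : iter st (N - 1) x0 ≠ none := Nat.find_min hterm (by omega)
    obtain ⟨xl, hxl⟩ : ∃ xl, iter st (N - 1) x0 = some xl := by
      rcases ho : iter st (N - 1) x0 with _ | z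
      · exact absurd ho hNm
      · exact ⟨z, rfl⟩
    have hstxl : st xl = none := by
      have hNs : iter st N x0 = none := Nat.find_spec hterm
      have : N = (N - 1) + 1 := by omega
      rw [this] at hNs
      simp only [iter, hxl] at hNs
      exact hNs
    rcases hgxl : g xl with _ | j
    · -- endpoint in I \ J
      have hxlJ : xl ∉ J := by
        intro hmem
        obtain ⟨j, hj⟩ := hg2 xl hmem
        rw [hgxl] at hj; exact absurd hj (by simp)
      have hxlI : xl ∈ I := by
        have hN1 : N ≠ 1 := by
          intro h
          rw [h] at hxl
          simp only [Nat.sub_self, iter] at hxl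
          exact hxlJ (Option.some_inj.mp hxl ▸ hx0J)
        have : N - 1 = (N - 2) + 1 := by omega
        rw [this] at hxl
        simp only [iter] at hxl
        obtain ⟨w, hw1, hw2⟩ := Option.bind_eq_some_iff.mp hxl
        exact hstI w xl hw2
      exact ⟨xl, Finset.mem_sdiff.mpr ⟨hxlI, hxlJ⟩, N - 1, hxl⟩
    · -- augmenting path: contradiction with maximality of I
      exfalso
      have hfinvj : finv j = none := by
        have : st xl = finv j := by simp [hst, hgxl]
        rw [← this, hstxl]
      have hnoy : ¬ ∃ y, f y = some j := hfinv2 j hfinvj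
      -- build the extended matching
      set f' : Fin n → Option (Fin m) :=
        fun y => if h : ∃ k, iter st k x0 = some y then g y else f y with hf'
      have hpath_g : ∀ y, (∃ k, iter st k x0 = some y) → ∃ j', g y = some j' := by
        intro y ⟨k, hk⟩
      -- k < N since iter is eventually none
        have hkN : k < N := by
          by_contra hge
          have := iter_none_le st (Nat.find_spec hterm) (b := k) (by omega)
          rw [hk] at this; exact absurd this (by simp)
        by_cases hkN1 : k = N - 1
        · have hy : y = xl := by
            rw [← Option.some_inj, ← hk, hkN1, hxl]
          exact ⟨j, hy ▸ hgxl⟩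
        · have hk1 : iter st (k + 1) x0 = st y := by simp [iter, hk]
          rcases hsy : st y with _ | w
          · exact absurd (hk1.trans hsy) (Nat.find_min hterm (by omega))
          · obtain ⟨j', hj', _⟩ := hst1 y w hsy
            exact ⟨j', hj'⟩
      -- the key mixed-injectivity fact
      have hmixed : ∀ y₁ y₂ j', (∃ k, iter st k x0 = some y₁) →
          ¬(∃ k, iter st k x0 = some y₂) → g y₁ = some j' → f y₂ = some j' → False := by
        intro y₁ y₂ j' ⟨k, hk⟩ hy₂ hgy₁ hfy₂
        rcases hfj : finv j' with _ | w
        · exact hfinv2 j' hfj ⟨y₂, hfy₂⟩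
        · have hfw : f w = some j' := hfinv1 j' w hfj
          have hwy₂ : w = y₂ := hf3 w y₂ j' hfw hfy₂
          have hsty₁ : st y₁ = some w := by simp [hst, hgy₁, hfj]
          exact hy₂ ⟨k + 1, by rw [← hwy₂]; simp [iter, hk, hsty₁]⟩
      have htrans : IsPartialTransversal A (insert x0 I) := by
        refine pack A (insert x0 I) f' ?_ ?_ ?_
        · intro y hy
          by_cases h : ∃ k, iter st k x0 = some y
          · obtain ⟨j', hj'⟩ := hpath_g y h
            exact ⟨j', by simp [hf', h, hj']⟩
          · have hyI : y ∈ I := by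
              rcases Finset.mem_insert.mp hy with h1 | h1
              · exact absurd ⟨0, by simp [iter, h1]⟩ h
              · exact h1
            obtain ⟨j', hj'⟩ := hf2 y hyI
            exact ⟨j', by simp [hf', h, hj']⟩
        · intro y j' hyj
          by_cases h : ∃ k, iter st k x0 = some y
          · have hgy : g y = some j' := by simpa [hf', h] using hyj
            exact (hg1 y j' hgy).2
          · have hfy : f y = some j' := by simpa [hf', h] using hyj
            exact (hf1 y j' hfy).2
        · intro y₁ y₂ j' hy₁ hy₂
          by_cases h1 : ∃ k, iter st k x0 = some y₁ <;>
            by_cases h2 : ∃ k, iter st k x0 = some y₂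
          · have hgy₁ : g y₁ = some j' := by simpa [hf', h1] using hy₁
            have hgy₂ : g y₂ = some j' := by simpa [hf', h2] using hy₂
            exact hg3 y₁ y₂ j' hgy₁ hgy₂
          · exact absurd (hmixed y₁ y₂ j' h1 h2 (by simpa [hf', h1] using hy₁)
              (by simpa [hf', h2] using hy₂)) (by simp)
          · exact absurd (hmixed y₂ y₁ j' h2 h1 (by simpa [hf', h2] using hy₂)
              (by simpa [hf', h1] using hy₁)) (by simp)
          · have hfy₁ : f y₁ = some j' := by simpa [hf', h1] using hy₁
            have hfy₂ : f y₂ = some j' := by simpa [hf', h2] using hy₂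
            exact hf3 y₁ y₂ j' hfy₁ hfy₂
      have := hImax (insert x0 I) htrans (Finset.subset_insert x0 I)
      exact hx0I (this ▸ Finset.mem_insert_self x0 I)
  -- the endpoint map and counting
  set E : Fin n → Fin n :=
    fun x0 => if h : ∃ y, y ∈ I \ J ∧ ∃ k, iter st k x0 = some y then h.choose else x0 with hE
  have hE1 : ∀ x0 ∈ J \ I, E x0 ∈ I \ J ∧ ∃ k, iter st k x0 = some (E x0) := by
    intro x0 hx0
    have h := hEx x0 hx0
    simp only [hE]
    rw [dif_pos h]
    exact h.choose_spec
  have hmaps : ∀ x0 ∈ J \ I, E x0 ∈ I \ J := fun x0 h => (hE1 x0 h).1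
  have hinjE : Set.InjOn E ↑(J \ I) := by
    intro x0 hx0 y0 hy0 hEq
    obtain ⟨_, k, hk⟩ := hE1 x0 (Finset.mem_coe.mp hx0)
    obtain ⟨_, k', hk'⟩ := hE1 y0 (Finset.mem_coe.mp hy0)
    rw [hEq] at hk
    exact (iter_inj st hstinj (↑(J \ I)) hSrange k k' x0 y0 (E y0) hx0 hy0 hk hk').2
  have hcard : (J \ I).card ≤ (I \ J).card := Finset.card_le_card_of_injOn E hmaps hinjE
  have h1 := Finset.card_sdiff_add_card_inter J I
  have h2 := Finset.card_sdiff_add_card_inter I J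
  rw [Finset.inter_comm] at h1
  omega

/-- All maximal partial transversals of a finite set system have the same cardinality. -/
theorem maximal_partial_transversals_same_card (n m : ℕ) (A : Fin m → Finset (Fin n))
    (I J : Finset (Fin n))
    (hI : IsPartialTransversal A I) (hJ : IsPartialTransversal A J)
    (hImax : ∀ I' : Finset (Fin n), IsPartialTransversal A I' → I ⊆ I' → I = I')
    (hJmax : ∀ J' : Finset (Fin n), IsPartialTransversal A J' → J ⊆ J' → J = J') :
    I.card = J.card := by
  exact le_antisymm (card_le_of_maximal_pt A J I hJ hI hJmax)
    (card_le_of_maximal_pt A I J hI hJ hImax)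
end

section
/- (Mirsky–Perfect) Let S = {a_1, …, a_n} be a finite set and 𝒜 = (A_1, …, A_m) a family of subsets of S. Let (t_{ij}) be a family of real numbers, indexed by the pairs (i,j) with a_j ∈ A_i, that is algebraically independent over ℚ. Let X_𝒜 be the m × n real matrix whose (i,j) entry is t_{ij} if a_j ∈ A_i and 0 otherwise. Then for every subset J of {1, …, n}, the columns of X_𝒜 indexed by J are linearly independent over ℝ if and only if {a_j : j ∈ J} is a partial transversal of 𝒜. In particular, X_𝒜 represents the transversal matroid T(𝒜) over ℝ. -/
/-- Product of distinct variables is a monomial. -/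
lemma prod_X_eq_monomial_aux {σ R : Type*} [CommSemiring R] {κ : Type*}
    (s : Finset κ) (v : κ → σ) :
    (∏ j ∈ s, (MvPolynomial.X (v j) : MvPolynomial σ R)) =
      MvPolynomial.monomial (∑ j ∈ s, Finsupp.single (v j) 1) 1 := by
  classical
  induction s using Finset.induction with
  | empty => simp
  | @insert a s h ih =>
      rw [Finset.prod_insert h, Finset.sum_insert h, ih, MvPolynomial.X,
        MvPolynomial.monomial_mul, one_mul]

/-- **Mirsky–Perfect.** If the nonzero entries `t i j` (placed at the positions `(i,j)`
with `a_j ∈ A_i` of the incidence pattern) form a family of reals algebraically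
independent over `ℚ`, then the resulting matrix represents the transversal matroid:
a set of its columns is linearly independent over `ℝ` iff the corresponding
ground-set elements form a partial transversal. -/
theorem mirsky_perfect (n m : ℕ) (A : Fin m → Finset (Fin n))
    (t : Fin m → Fin n → ℝ)
    (ht : AlgebraicIndependent ℚ
      (fun p : {p : Fin m × Fin n // p.2 ∈ A p.1} => t p.1.1 p.1.2))
    (X : Matrix (Fin m) (Fin n) ℝ)
    (hX : ∀ i j, X i j = if j ∈ A i then t i j else 0)
    (J : Finset (Fin n)) :
    LinearIndependent ℝ (fun j : J => fun i : Fin m => X i j) ↔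
      IsPartialTransversal A J := by
  classical
  set ι := {p : Fin m × Fin n // p.2 ∈ A p.1} with hι
  set g : ι → ℝ := fun p => t p.1.1 p.1.2 with hg
  constructor
  · -- linear independence implies partial transversal, via Hall's theorem
    intro hli
    set T : J → Finset (Fin m) :=
      fun x => Finset.univ.filter (fun i => (x : Fin n) ∈ A i) with hT
    have hall : ∀ s : Finset J, s.card ≤ (s.biUnion T).card := by
      intro s
      by_contra hcon
      push_neg at hcon
      set K := s.biUnion T with hK
      -- the columns in `s` are linearly independent
      have h1 : LinearIndependent ℝ (fun x : s => fun i : Fin m => X i x.1.1) :=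
        hli.comp (fun x : s => x.1) Subtype.coe_injective
      -- restricted to coordinates in `K`, they stay linearly independent
      have h2 : LinearIndependent ℝ (fun x : s => fun k : K => X k.1 x.1.1) := by
        rw [Fintype.linearIndependent_iff]
        intro c hc
        have hzero : ∑ x : s, c x • (fun i : Fin m => X i x.1.1) = 0 := by
          funext i
          by_cases hi : i ∈ K
          · have := congrFun hc ⟨i, hi⟩
            simpa using this
          · simp only [Finset.sum_apply, Pi.smul_apply, Pi.zero_apply, smul_eq_mul]
            apply Finset.sum_eq_zero
            intro x _
            have hXz : X i x.1.1 = 0 := by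
              rw [hX, if_neg]
              intro hmem
              exact hi (Finset.mem_biUnion.mpr ⟨x.1, x.2,
                Finset.mem_filter.mpr ⟨Finset.mem_univ _, hmem⟩⟩)
            rw [hXz, mul_zero]
        exact Fintype.linearIndependent_iff.mp h1 c hzero
      have hcard := h2.fintype_card_le_finrank
      rw [Module.finrank_fintype_fun_eq_card] at hcard
      simp only [Fintype.card_coe] at hcard
      omega
    obtain ⟨f, hfinj, hf⟩ := (Finset.all_card_le_biUnion_card_iff_exists_injective T).mp hall
    refine ⟨f, hfinj, fun x => ?_⟩
    have := hf x
    rw [hT] at this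
    simpa using this
  · -- partial transversal implies linear independence, via a nonzero determinant
    rintro ⟨φ, hinj, hφ⟩
    -- the polynomial matrix
    set Mp : Matrix J J (MvPolynomial ι ℚ) :=
      fun j k => if h : (k : Fin n) ∈ A (φ j) then MvPolynomial.X ⟨(φ j, k), h⟩ else 0 with hMp
    set Mr : Matrix J J ℝ := fun j k => X (φ j) (k : Fin n) with hMr
    -- the distinguished monomial
    set m₀ : ι →₀ ℕ := ∑ j : J, Finsupp.single (⟨(φ j, j), hφ j⟩ : ι) 1 with hm₀
    have key : MvPolynomial.coeff m₀ Mp.det = 1 := by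
      rw [Matrix.det_apply, MvPolynomial.coeff_sum]
      have hterm : ∀ σ : Equiv.Perm J,
          MvPolynomial.coeff m₀ (Equiv.Perm.sign σ • ∏ i, Mp (σ i) i) =
            if σ = 1 then 1 else 0 := by
        intro σ
        rw [MvPolynomial.coeff_smul]
        by_cases hmem : ∀ j : J, (j : Fin n) ∈ A (φ (σ j))
        · have hprod : (∏ i, Mp (σ i) i) =
              MvPolynomial.monomial
                (∑ j : J, Finsupp.single (⟨(φ (σ j), j), hmem j⟩ : ι) 1) 1 := by
            rw [← prod_X_eq_monomial_aux]
            apply Finset.prod_congr rfl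
            intro j _
            simp only [hMp]
            rw [dif_pos (hmem j)]
          rw [hprod, MvPolynomial.coeff_monomial]
          by_cases hσ : σ = 1
          · subst hσ
            rw [if_pos, if_pos rfl]
            · simp
            · rw [hm₀]
              apply Finset.sum_congr rfl
              intro j _
              congr 1
          · rw [if_neg, if_neg hσ]
            · simp
            · -- the monomials differ
              intro heq
              obtain ⟨j, hj⟩ : ∃ j : J, σ j ≠ j := by
                by_contra hc
                push_neg at hc
                exact hσ (Equiv.ext hc)
              set p₀ : ι := ⟨(φ j, j), hφ j⟩ with hp₀
              have h₁ : m₀ p₀ = 1 := by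
                rw [hm₀, Finsupp.finset_sum_apply]
                rw [Finset.sum_eq_single j]
                · rw [Finsupp.single_apply, if_pos rfl]
                · intro b _ hb
                  rw [Finsupp.single_apply, if_neg]
                  intro hbb
                  apply hb
                  have : (b : Fin n) = (j : Fin n) := congrArg (fun q : ι => q.1.2) hbb
                  exact Subtype.coe_injective this
                · intro hj'; exact absurd (Finset.mem_univ j) hj'
              have h₂ : (∑ j' : J, Finsupp.single (⟨(φ (σ j'), j'), hmem j'⟩ : ι) 1) p₀ = 0 := by
                rw [Finsupp.finset_sum_apply]
                apply Finset.sum_eq_zero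
                intro b _
                rw [Finsupp.single_apply, if_neg]
                intro hbb
                have hb2 : (b : Fin n) = (j : Fin n) := congrArg (fun q : ι => q.1.2) hbb
                have hbj : b = j := Subtype.coe_injective hb2
                subst hbj
                have hb1 : φ (σ b) = φ b := congrArg (fun q : ι => q.1.1) hbb
                exact hj (hinj hb1)
              rw [heq, h₁] at h₂
              exact one_ne_zero h₂
        · push_neg at hmem
          obtain ⟨j, hj⟩ := hmem
          have hzero : (∏ i, Mp (σ i) i) = 0 := by
            apply Finset.prod_eq_zero (Finset.mem_univ j)
            simp only [hMp]
            rw [dif_neg hj]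
          have hσ : σ ≠ 1 := by
            intro h1
            subst h1
            exact hj (hφ j)
          rw [hzero, if_neg hσ]
          simp
      rw [Finset.sum_congr rfl (fun σ _ => hterm σ)]
      simp
    have hdetp : Mp.det ≠ 0 := by
      intro h0
      rw [h0, MvPolynomial.coeff_zero] at key
      exact zero_ne_one key
    -- mapping to the reals
    have hmapM : Mp.map (MvPolynomial.aeval g) = Mr := by
      funext j k
      simp only [Matrix.map_apply]
      simp only [Matrix.map_apply, hMp, hMr]
      by_cases h : (k : Fin n) ∈ A (φ j)
      · rw [dif_pos h, MvPolynomial.aeval_X, hX, if_pos h]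
      · rw [dif_neg h, map_zero, hX, if_neg h]
    have hdetr : Mr.det ≠ 0 := by
      have hmapdet : (MvPolynomial.aeval g : MvPolynomial ι ℚ →ₐ[ℚ] ℝ) Mp.det = Mr.det := by
        rw [AlgHom.map_det, AlgHom.mapMatrix_apply, hmapM]
      intro h0
      rw [h0] at hmapdet
      have : Mp.det = 0 := by
        apply algebraicIndependent_iff_injective_aeval.mp ht
        rw [hmapdet, map_zero]
      exact hdetp this
    rw [Fintype.linearIndependent_iff]
    intro c hc
    have hmv : Mr.mulVec c = 0 := by
      funext j
      have := congrFun hc (φ j)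
      simp only [Finset.sum_apply, Pi.smul_apply, Pi.zero_apply, smul_eq_mul] at this
      simp only [Matrix.mulVec, dotProduct, Pi.zero_apply]
      rw [← this]
      apply Finset.sum_congr rfl
      intro k _
      simp only [hMr]
      rw [mul_comm]
    have hc0 := Matrix.eq_zero_of_mulVec_eq_zero hdetr hmv
    intro i
    exact congrFun hc0 i
end

section
/- Every transversal matroid is representable over the real numbers. Precisely: for every finite set S = {a_1, …, a_n} and finite family 𝒜 = (A_1, …, A_m) of subsets of S, there exists an m × n matrix X over ℝ such that for every subset J of {1, …, n}, the columns of X indexed by J are linearly independent over ℝ if and only if {a_j : j ∈ J} is a partial transversal of 𝒜. -/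
open MvPolynomial Matrix
open scoped Classical

noncomputable section TM

variable {n m : ℕ}

/-- Generic polynomial matrix with zero pattern given by `A`. -/
def Pmat (A : Fin m → Finset (Fin n)) : Matrix (Fin m) (Fin n) (MvPolynomial (Fin m × Fin n) ℝ) :=
  Matrix.of fun i j => if j ∈ A i then MvPolynomial.X (i, j) else 0

/-- Determinant of the matched square submatrix, for a partial transversal `J`. -/
def dpoly (A : Fin m → Finset (Fin n)) (J : Finset (Fin n)) : MvPolynomial (Fin m × Fin n) ℝ :=
  if h : IsPartialTransversal A J then
    Matrix.det (Matrix.of fun r c : J => Pmat A (h.choose r) ↑c)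
  else 1

theorem dpoly_ne_zero (A : Fin m → Finset (Fin n)) (J : Finset (Fin n)) :
    dpoly A J ≠ 0 := by
  unfold dpoly
  split_ifs with h
  · set φ := h.choose with hφ
    obtain ⟨hinj, hmem⟩ := h.choose_spec
    set v : Fin m × Fin n → ℝ := fun p => if ∃ c : J, p = (φ c, ↑c) then 1 else 0 with hv
    intro hzero
    have hev : eval v (Matrix.det (Matrix.of fun r c : J => Pmat A (φ r) ↑c)) = 0 := by
      rw [hzero]; simp
    rw [RingHom.map_det, RingHom.mapMatrix_apply] at hev
    have hone : (Matrix.of fun r c : J => Pmat A (φ r) ↑c).map (eval v) = 1 := by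
      ext r c
      simp only [Matrix.map_apply, Matrix.of_apply, Pmat, Matrix.one_apply]
      by_cases hrc : r = c
      · subst hrc
        rw [if_pos (hmem r), if_pos rfl]
        simp only [eval_X, hv]
        exact if_pos ⟨r, rfl⟩
      · rw [if_neg hrc]
        by_cases hm : (↑c : Fin n) ∈ A (φ r)
        · rw [if_pos hm]
          simp only [eval_X, hv]
          rw [if_neg]
          rintro ⟨c', hc'⟩
          have h2 : (↑c : Fin n) = ↑c' := congrArg Prod.snd hc'
          have hcc : c = c' := Subtype.ext h2
          have h1 : φ r = φ c' := congrArg Prod.fst hc'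
          exact hrc (hinj (h1.trans (congrArg φ hcc.symm)))
        · rw [if_neg hm]; simp
    rw [hone, Matrix.det_one] at hev
    exact one_ne_zero hev
  · exact one_ne_zero

end TM

/-- Every transversal matroid is representable over the real numbers: there is an
`m × n` real matrix whose columns indexed by `J` are linearly independent iff the
corresponding ground-set elements form a partial transversal. -/
theorem transversal_matroid_representable_real (n m : ℕ) (A : Fin m → Finset (Fin n)) :
    ∃ X : Matrix (Fin m) (Fin n) ℝ,
      ∀ J : Finset (Fin n),
        LinearIndependent ℝ (fun j : J => fun i : Fin m => X i j) ↔
          IsPartialTransversal A J := by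
  classical
  obtain ⟨v₀, hv₀⟩ : ∃ v₀ : Fin m × Fin n → ℝ,
      eval v₀ (∏ J : Finset (Fin n), dpoly A J) ≠ 0 := by
    by_contra hc
    push_neg at hc
    have hF : (∏ J : Finset (Fin n), dpoly A J) = 0 :=
      MvPolynomial.funext (fun x => by simpa using hc x)
    exact (Finset.prod_ne_zero_iff.mpr (fun J _ => dpoly_ne_zero A J)) hF
  refine ⟨(Pmat A).map (eval v₀), fun J => ?_⟩
  constructor
  · -- independent ⇒ partial transversal, via Hall
    intro hli
    set t : J → Finset (Fin m) := fun x => Finset.univ.filter (fun i => (x : Fin n) ∈ A i) with ht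
    have hall : ∀ s : Finset J, s.card ≤ (s.biUnion t).card := by
      intro s
      by_contra hlt
      push_neg at hlt
      set T := s.biUnion t with hT
      set E : Finset (Fin m → ℝ) := T.image (fun i => (Pi.single i (1 : ℝ) : Fin m → ℝ)) with hE
      have hw : LinearIndependent ℝ
          (fun r : s => fun i : Fin m => ((Pmat A).map (eval v₀)) i ↑(↑r : J)) :=
        hli.comp (fun r : s => (r : J)) Subtype.val_injective
      have hsub : ∀ r : s,
          (fun i : Fin m => ((Pmat A).map (eval v₀)) i ↑(↑r : J)) ∈
            Submodule.span ℝ (E : Set (Fin m → ℝ)) := by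
        intro r
        have key : (fun i : Fin m => ((Pmat A).map (eval v₀)) i ↑(↑r : J))
            = ∑ i ∈ T, ((Pmat A).map (eval v₀)) i ↑(↑r : J) •
                (Pi.single i (1 : ℝ) : Fin m → ℝ) := by
          funext i'
          rw [Finset.sum_apply]
          by_cases hiT : i' ∈ T
          · rw [Finset.sum_eq_single i']
            · simp [Pi.single_apply]
            · intro b _ hbne
              simp [Pi.single_apply, Ne.symm hbne]
            · intro hcon; exact absurd hiT hcon
          · have hX : ((Pmat A).map (eval v₀)) i' ↑(↑r : J) = 0 := by
              have hnm : ((↑(↑r : J) : Fin n)) ∉ A i' := by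
                intro hmem
                exact hiT (Finset.mem_biUnion.mpr ⟨↑r, r.2, by simp [ht, hmem]⟩)
              simp [Pmat, Matrix.map_apply, hnm]
            rw [hX]
            refine (Finset.sum_eq_zero fun b hb => ?_).symm
            have hne : i' ≠ b := fun e => hiT (e ▸ hb)
            simp [Pi.single_apply, hne]
        rw [key]
        exact Submodule.sum_smul_mem _ _
          (fun i hi => Submodule.subset_span (Finset.mem_image_of_mem _ hi))
      have hle : Submodule.span ℝ
            (Set.range fun r : s => fun i : Fin m => ((Pmat A).map (eval v₀)) i ↑(↑r : J))
          ≤ Submodule.span ℝ (E : Set (Fin m → ℝ)) := by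
        rw [Submodule.span_le]
        rintro _ ⟨r, rfl⟩
        exact hsub r
      have h1 : s.card = Module.finrank ℝ (Submodule.span ℝ
          (Set.range fun r : s => fun i : Fin m => ((Pmat A).map (eval v₀)) i ↑(↑r : J))) := by
        rw [finrank_span_eq_card hw, Fintype.card_coe]
      have h2 := Submodule.finrank_mono hle
      have h3 : Module.finrank ℝ (Submodule.span ℝ (E : Set (Fin m → ℝ))) ≤ E.card :=
        finrank_span_finset_le_card E
      have h4 : E.card ≤ T.card := Finset.card_image_le
      omega
    obtain ⟨f, hfinj, hf⟩ := (Finset.all_card_le_biUnion_card_iff_exists_injective t).mp hall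
    exact ⟨f, hfinj, fun x => by simpa [ht] using hf x⟩
  · -- partial transversal ⇒ independent
    intro h
    have hdet : eval v₀ (dpoly A J) ≠ 0 := by
      intro h0
      exact hv₀ (by rw [map_prod]; exact Finset.prod_eq_zero (Finset.mem_univ J) h0)
    rw [dpoly, dif_pos h, RingHom.map_det, RingHom.mapMatrix_apply] at hdet
    have hunit : IsUnit ((Matrix.of fun r c : J => Pmat A (h.choose r) ↑c).map (eval v₀)) :=
      (Matrix.isUnit_iff_isUnit_det _).mpr (isUnit_iff_ne_zero.mpr hdet)
    have hcols := Matrix.linearIndependent_cols_iff_isUnit.mpr hunit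
    apply LinearIndependent.of_comp (LinearMap.funLeft ℝ ℝ (fun r : J => h.choose r))
    exact hcols
end

section
/- (Piff–Welsh, characteristic zero case) Every transversal matroid is representable over the rational numbers. Precisely: for every finite set S = {a_1, …, a_n} and finite family 𝒜 = (A_1, …, A_m) of subsets of S, there exists an m × n matrix X with entries in ℚ such that, for every subset J of {1, …, n}, the columns of X indexed by J are linearly independent over ℚ if and only if {a_j : j ∈ J} is a partial transversal of 𝒜. -/
open MvPolynomial in
lemma genDet_ne_zero {n m : ℕ} (A : Fin m → Finset (Fin n)) {J : Finset (Fin n)}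
    (φ : J → Fin m) (hinj : Function.Injective φ)
    (hmem : ∀ x : J, (x : Fin n) ∈ A (φ x)) :
    (Matrix.of fun x y : J =>
      if (y : Fin n) ∈ A (φ x) then (X (φ x, (y : Fin n)) : MvPolynomial (Fin m × Fin n) ℚ)
      else 0).det ≠ 0 := by
  classical
  set M : Matrix J J (MvPolynomial (Fin m × Fin n) ℚ) :=
    Matrix.of fun x y : J =>
      if (y : Fin n) ∈ A (φ x) then (X (φ x, (y : Fin n)) : MvPolynomial (Fin m × Fin n) ℚ)
      else 0 with hM
  set d : (Fin m × Fin n) →₀ ℕ := ∑ x : J, Finsupp.single (φ x, (x : Fin n)) 1 with hd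
  have happly : ∀ (ψ : J → Fin m) (p : Fin m × Fin n),
      (∑ x : J, Finsupp.single (ψ x, (x : Fin n)) 1) p
        = ∑ x : J, (if (ψ x, (x : Fin n)) = p then 1 else 0) := by
    intro ψ p
    rw [Finsupp.finset_sum_apply]
    exact Finset.sum_congr rfl fun x _ => Finsupp.single_apply
  have hterm : ∀ σ : Equiv.Perm J,
      MvPolynomial.coeff d (∏ x : J, M (σ x) x) = if σ = 1 then 1 else 0 := by
    intro σ
    by_cases hall : ∀ x : J, (x : Fin n) ∈ A (φ (σ x))
    · have hprod : (∏ x : J, M (σ x) x)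
          = monomial (∑ x : J, Finsupp.single (φ (σ x), (x : Fin n)) 1) 1 := by
        rw [monomial_sum_one]
        refine Finset.prod_congr rfl fun x _ => ?_
        rw [hM]; simp only [Matrix.of_apply, if_pos (hall x)]
        rfl
      rw [hprod, coeff_monomial]
      by_cases hσ : σ = 1
      · subst hσ
        rw [if_pos, if_pos rfl]
        simp [hd]
      · rw [if_neg, if_neg hσ]
        obtain ⟨x, hx⟩ : ∃ x, σ x ≠ x := by
          by_contra h; push_neg at h; exact hσ (Equiv.ext h)
        intro heq
        have h1 : (∑ y : J, Finsupp.single (φ (σ y), (y : Fin n)) 1) (φ x, (x : Fin n)) = 0 := by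
          rw [happly]
          refine Finset.sum_eq_zero fun y _ => ?_
          rw [if_neg]
          intro hpe
          have h2 : (y : Fin n) = (x : Fin n) := (Prod.ext_iff.mp hpe).2
          have h3 : y = x := Subtype.ext h2
          subst h3
          exact hx (hinj (Prod.ext_iff.mp hpe).1)
        have h4 : d (φ x, (x : Fin n)) = 1 := by
          rw [hd, happly]
          have : ∀ y : J, (if (φ y, (y : Fin n)) = (φ x, (x : Fin n)) then (1:ℕ) else 0)
              = if y = x then 1 else 0 := by
            intro y
            congr 1
            simp only [eq_iff_iff]
            constructor
            · intro hpe; exact Subtype.ext (Prod.ext_iff.mp hpe).2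
            · rintro rfl; rfl
          rw [Finset.sum_congr rfl fun y _ => this y]
          simp
        rw [heq] at h1
        rw [h4] at h1
        exact one_ne_zero h1
    · push_neg at hall
      obtain ⟨x, hx⟩ := hall
      have h0 : (∏ y : J, M (σ y) y) = 0 := by
        refine Finset.prod_eq_zero (Finset.mem_univ x) ?_
        rw [hM]; simp only [Matrix.of_apply, if_neg hx]
      have hσ : σ ≠ 1 := by
        rintro rfl; exact hx (hmem x)
      rw [h0, if_neg hσ, MvPolynomial.coeff_zero]
  have key : MvPolynomial.coeff d M.det = 1 := by
    rw [Matrix.det_apply, MvPolynomial.coeff_sum]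
    have : ∀ σ : Equiv.Perm J,
        MvPolynomial.coeff d (Equiv.Perm.sign σ • ∏ x : J, M (σ x) x)
          = if σ = 1 then 1 else 0 := by
      intro σ
      rw [MvPolynomial.coeff_smul, hterm σ]
      by_cases hσ : σ = 1 <;> simp [hσ]
    rw [Finset.sum_congr rfl fun σ _ => this σ]
    simp
  intro h
  rw [h, MvPolynomial.coeff_zero] at key
  exact zero_ne_one key

/-- **Piff–Welsh (characteristic zero case).** Every transversal matroid is
representable over the rational numbers. -/
theorem transversal_matroid_representable_rat (n m : ℕ) (A : Fin m → Finset (Fin n)) :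
    ∃ X : Matrix (Fin m) (Fin n) ℚ,
      ∀ J : Finset (Fin n),
        LinearIndependent ℚ (fun j : J => fun i : Fin m => X i j) ↔
          IsPartialTransversal A J := by
  classical
  -- the generic matrix
  set P : Matrix (Fin m) (Fin n) (MvPolynomial (Fin m × Fin n) ℚ) :=
    fun i j => if j ∈ A i then MvPolynomial.X (i, j) else 0 with hP
  -- all the determinants we need to be nonzero
  set Q : (Σ J : Finset (Fin n), (J → Fin m)) → MvPolynomial (Fin m × Fin n) ℚ :=
    fun p =>
      if (Function.Injective p.2 ∧ ∀ x : p.1, (x : Fin n) ∈ A (p.2 x)) then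
        (Matrix.of fun x y : p.1 => P (p.2 x) (y : Fin n)).det
      else 1 with hQdef
  have hQ : ∀ p, Q p ≠ 0 := by
    rintro ⟨J, φ⟩
    rw [hQdef]
    dsimp only
    split_ifs with h
    · have := genDet_ne_zero A φ h.1 h.2
      convert this using 2
    · exact one_ne_zero
  have hprod : (∏ p, Q p) ≠ 0 :=
    Finset.prod_ne_zero_iff.mpr fun p _ => hQ p
  obtain ⟨v, hv⟩ : ∃ v : Fin m × Fin n → ℚ, MvPolynomial.eval v (∏ p, Q p) ≠ 0 := by
    by_contra h
    push_neg at h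
    exact hprod (MvPolynomial.funext fun x => by simp [h x])
  have hvQ : ∀ p, MvPolynomial.eval v (Q p) ≠ 0 := by
    intro p hp
    apply hv
    rw [map_prod]
    exact Finset.prod_eq_zero (Finset.mem_univ p) hp
  refine ⟨fun i j => MvPolynomial.eval v (P i j), fun J => ?_⟩
  set X : Matrix (Fin m) (Fin n) ℚ := fun i j => MvPolynomial.eval v (P i j) with hX
  constructor
  · -- linear independence → partial transversal, via Hall
    intro hli
    set t : J → Finset (Fin m) := fun x => Finset.univ.filter (fun i => (x : Fin n) ∈ A i)
      with ht
    have hall : ∀ s : Finset J, s.card ≤ (s.biUnion t).card := by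
      intro s
      set N : Finset (Fin m) := s.biUnion t with hN
      -- the columns indexed by s, restricted to coordinates in N
      set c : J → (Fin m → ℚ) := fun j => fun i => X i (j : Fin n) with hc
      have hsupp : ∀ y : J, y ∈ s → ∀ i : Fin m, i ∉ N → c y i = 0 := by
        intro y hy i hi
        have : (y : Fin n) ∉ A i := by
          intro hmem
          exact hi (Finset.mem_biUnion.mpr ⟨y, hy, by simp [ht, hmem]⟩)
        simp [hc, hX, hP, this]
      have hli' : LinearIndependent ℚ (fun y : s => c (y : J)) :=
        hli.comp (Subtype.val : s → J) Subtype.val_injective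
      set π : (Fin m → ℚ) →ₗ[ℚ] (N → ℚ) := LinearMap.funLeft ℚ ℚ (Subtype.val : N → Fin m)
        with hπ
      have hdisj : Disjoint (Submodule.span ℚ (Set.range fun y : s => c (y : J)))
          (LinearMap.ker π) := by
        have hspan : ∀ w ∈ Submodule.span ℚ (Set.range fun y : s => c (y : J)),
            ∀ i : Fin m, i ∉ N → w i = 0 := by
          intro w hw
          induction hw using Submodule.span_induction with
          | mem z hz =>
              obtain ⟨y, rfl⟩ := hz
              exact hsupp y y.2
          | zero => intro i _; rfl
          | add a b _ _ ha hb => intro i hi; simp [Pi.add_apply, ha i hi, hb i hi]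
          | smul r a _ ha => intro i hi; simp [Pi.smul_apply, ha i hi]
        rw [Submodule.disjoint_def]
        intro w hw hker
        have hw0 : ∀ i : Fin m, i ∉ N → w i = 0 := hspan w hw
        have hker' : ∀ i : Fin m, i ∈ N → w i = 0 := by
          intro i hi
          have := congrFun (LinearMap.mem_ker.mp hker) ⟨i, hi⟩
          simpa [hπ, LinearMap.funLeft] using this
        funext i
        by_cases hi : i ∈ N
        · exact hker' i hi
        · exact hw0 i hi
      have hli'' : LinearIndependent ℚ (π ∘ fun y : s => c (y : J)) := hli'.map hdisj
      have := hli''.fintype_card_le_finrank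
      rw [Module.finrank_pi ℚ] at this
      simpa [Fintype.card_coe] using this
    have := (Finset.all_card_le_biUnion_card_iff_existsInjective' t).mp hall
    obtain ⟨f, hf1, hf2⟩ := this
    refine ⟨f, hf1, fun x => ?_⟩
    have := hf2 x
    simpa [t] using this
  · -- partial transversal → linear independence
    rintro ⟨φ, hinj, hmem⟩
    have hQp := hvQ ⟨J, φ⟩
    rw [hQdef] at hQp
    dsimp only at hQp
    rw [if_pos ⟨hinj, hmem⟩] at hQp
    have hdet : (Matrix.of fun x y : J => X (φ x) (y : Fin n)).det ≠ 0 := by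
      rw [RingHom.map_det] at hQp
      convert hQp using 2
      rfl
    have hunit : IsUnit (Matrix.of fun x y : J => X (φ x) (y : Fin n)) := by
      rw [Matrix.isUnit_iff_isUnit_det, isUnit_iff_ne_zero]
      exact hdet
    have hcols := Matrix.linearIndependent_cols_iff_isUnit.mpr hunit
    set π : (Fin m → ℚ) →ₗ[ℚ] (J → ℚ) := LinearMap.funLeft ℚ ℚ φ with hπ
    refine LinearIndependent.of_comp π ?_
    convert hcols using 1
    all_goals rfl
end

section
/- (Piff–Welsh, positive characteristic case) For every prime p, every transversal matroid is representable over a sufficiently large finite field of characteristic p. Precisely: for every finite set S = {a_1, …, a_n}, every finite family 𝒜 = (A_1, …, A_m) of subsets of S, and every prime p, there exists a positive integer k and an m × n matrix X with entries in the finite field GF(p^k) such that, for every subset J of {1, …, n}, the columns of X indexed by J are linearly independent over GF(p^k) if and only if {a_j : j ∈ J} is a partial transversal of 𝒜. -/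
open MvPolynomial

/-- A family of vectors supported on a coordinate set `N` and linearly independent
has cardinality at most `N.card`. -/
lemma aux_card_le_of_supported {K : Type*} [Field K] {m : ℕ} {ι : Type*} [Fintype ι]
    (v : ι → Fin m → K) (N : Finset (Fin m))
    (hsupp : ∀ j i, i ∉ N → v j i = 0) (h : LinearIndependent K v) :
    Fintype.card ι ≤ N.card := by
  classical
  have hw : LinearIndependent K (fun j (i : N) => v j i) := by
    rw [Fintype.linearIndependent_iff] at h ⊢
    intro c hc j
    refine h c ?_ j
    funext x
    by_cases hx : x ∈ N
    · have := congrFun hc ⟨x, hx⟩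
      simpa [Finset.sum_apply] using this
    · simp [Finset.sum_apply, hsupp _ x hx]
  have h1 := hw.fintype_card_le_finrank
  simpa [Module.finrank_fintype_fun_eq_card] using h1

/-- If some square "row-selected" submatrix of the columns has nonzero determinant,
the columns are linearly independent. -/
lemma aux_li_of_det {K : Type*} [Field K] {m : ℕ} {ι : Type*} [Fintype ι] [DecidableEq ι]
    (v : ι → Fin m → K) (φ : ι → Fin m)
    (h : (Matrix.of (fun i j : ι => v j (φ i))).det ≠ 0) :
    LinearIndependent K v := by
  rw [Fintype.linearIndependent_iff]
  intro c hc
  have h0 : Matrix.mulVec (Matrix.of fun i j : ι => v j (φ i)) c = 0 := by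
    funext i
    have := congrFun hc (φ i)
    simpa [Matrix.mulVec, dotProduct, Finset.sum_apply, mul_comm] using this
  have h2 := Matrix.eq_zero_of_mulVec_eq_zero h h0
  exact fun i => congrFun h2 i

/-- The determinant of a matrix with entries homogeneous of degree 1 is homogeneous. -/
lemma aux_det_homog {K : Type*} [CommRing K] {σ : Type*} {ι : Type*} [Fintype ι] [DecidableEq ι]
    (M : Matrix ι ι (MvPolynomial σ K)) (h : ∀ i j, (M i j).IsHomogeneous 1) :
    M.det.IsHomogeneous (Fintype.card ι) := by
  rw [Matrix.det_apply]
  apply MvPolynomial.IsHomogeneous.sum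
  intro σ' _
  have hprod : (∏ i, M (σ' i) i).IsHomogeneous (Fintype.card ι) := by
    have := MvPolynomial.IsHomogeneous.prod Finset.univ (fun i => M (σ' i) i) (fun _ => 1)
      (fun i _ => h _ _)
    simpa using this
  have : (Equiv.Perm.sign σ' • ∏ i, M (σ' i) i)
      = C (((Equiv.Perm.sign σ' : ℤ) : K)) * ∏ i, M (σ' i) i := by
    rw [Units.smul_def, zsmul_eq_mul, ← map_intCast (C : K →+* MvPolynomial σ K)]
  rw [this]
  exact hprod.C_mul _

/-- **Piff–Welsh (positive characteristic case).** For every prime `p`, every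
transversal matroid is representable over a sufficiently large finite field
`GF(p^k)` of characteristic `p`. -/
theorem transversal_matroid_representable_finite_field
    (n m : ℕ) (A : Fin m → Finset (Fin n)) (p : ℕ) [Fact p.Prime] :
    ∃ k : ℕ, 0 < k ∧
      ∃ X : Matrix (Fin m) (Fin n) (GaloisField p k),
        ∀ J : Finset (Fin n),
          LinearIndependent (GaloisField p k) (fun j : J => fun i : Fin m => X i j) ↔
            IsPartialTransversal A J := by
  classical
  set k : ℕ := n * 2 ^ n + 1 with hkdef
  refine ⟨k, Nat.succ_pos _, ?_⟩
  set K := GaloisField p k with hK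
  -- the generic matrix of indeterminates
  set P : Matrix (Fin m) (Fin n) (MvPolynomial (Fin m × Fin n) K) :=
    Matrix.of (fun i j => if j ∈ A i then MvPolynomial.X (i, j) else 0) with hP
  -- determinant polynomials of row-selected square submatrices
  set d : ∀ J : Finset (Fin n), (J → Fin m) → MvPolynomial (Fin m × Fin n) K :=
    fun J φ => (P.submatrix φ (fun j : J => (j : Fin n))).det with hd
  -- the chosen matching for each partial transversal
  have key : ∀ (J : Finset (Fin n)) (φ : J → Fin m), Function.Injective φ →
      (∀ x : J, (x : Fin n) ∈ A (φ x)) → d J φ ≠ 0 := by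
    intro J φ hinj hmem
    set w : Fin m × Fin n → K :=
      fun q => if ∃ hb : q.2 ∈ J, φ ⟨q.2, hb⟩ = q.1 then 1 else 0 with hw
    have heval : MvPolynomial.eval w (d J φ) = 1 := by
      rw [hd]
      rw [RingHom.map_det, RingHom.mapMatrix_apply]
      have hone : (P.submatrix φ (fun j : J => (j : Fin n))).map (MvPolynomial.eval w)
          = (1 : Matrix J J K) := by
        ext i j
        simp only [Matrix.map_apply, Matrix.submatrix_apply, hP, Matrix.of_apply]
        by_cases hij : i = j
        · subst hij
          rw [if_pos (hmem i)]
          simp only [eval_X, hw]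
          rw [Matrix.one_apply_eq]
          exact if_pos ⟨i.2, trivial⟩
        · have hwz : w (φ i, (j : Fin n)) = 0 := by
            rw [hw]
            simp only
            rw [if_neg]
            rintro ⟨hb, hφ⟩
            have : (⟨(j : Fin n), hb⟩ : J) = j := rfl
            rw [this] at hφ
            exact hij (hinj hφ).symm
          rw [Matrix.one_apply_ne hij]
          by_cases hmem' : (j : Fin n) ∈ A (φ i)
          · rw [if_pos hmem', eval_X, hwz]
          · rw [if_neg hmem', map_zero]
      rw [hone, Matrix.det_one]
    intro h0
    rw [h0, map_zero] at heval
    exact zero_ne_one heval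
  -- the master polynomial
  set D : MvPolynomial (Fin m × Fin n) K :=
    ∏ J : Finset (Fin n),
      if h : IsPartialTransversal A J then d J h.choose else 1 with hD
  have hD0 : D ≠ 0 := by
    rw [hD]
    rw [Finset.prod_ne_zero_iff]
    intro J _
    by_cases h : IsPartialTransversal A J
    · rw [dif_pos h]
      exact key J h.choose h.choose_spec.1 h.choose_spec.2
    · rw [dif_neg h]; exact one_ne_zero
  -- homogeneity
  set n₀ : ℕ := ∑ J : Finset (Fin n), if IsPartialTransversal A J then J.card else 0 with hn₀
  have hDhom : D.IsHomogeneous n₀ := by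
    rw [hD, hn₀]
    apply MvPolynomial.IsHomogeneous.prod
    intro J _
    by_cases h : IsPartialTransversal A J
    · rw [dif_pos h, if_pos h, hd]
      have := aux_det_homog (P.submatrix h.choose (fun j : J => (j : Fin n))) ?_
      · simpa [Fintype.card_coe] using this
      · intro i j
        simp only [Matrix.submatrix_apply, hP, Matrix.of_apply]
        by_cases hm : (j : Fin n) ∈ A (h.choose i)
        · rw [if_pos hm]; exact isHomogeneous_X _ _
        · rw [if_neg hm]; exact isHomogeneous_zero _ _ _
    · rw [dif_neg h, if_neg h]
      exact isHomogeneous_one _ _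
  -- the degree is small compared to the field size
  have hn₀le : n₀ ≤ n * 2 ^ n := by
    rw [hn₀]
    calc ∑ J : Finset (Fin n), (if IsPartialTransversal A J then J.card else 0)
        ≤ ∑ _J : Finset (Fin n), n := by
          apply Finset.sum_le_sum
          intro J _
          by_cases h : IsPartialTransversal A J
          · rw [if_pos h]; simpa using Finset.card_le_univ J
          · rw [if_neg h]; exact Nat.zero_le n
      _ = 2 ^ n * n := by simp [Finset.card_univ, mul_comm]
      _ = n * 2 ^ n := mul_comm _ _
  have hcard : (n₀ : Cardinal) ≤ Cardinal.mk K := by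
    haveI : Fintype K := Fintype.ofFinite K
    rw [Cardinal.mk_fintype]
    rw [← Nat.card_eq_fintype_card, hK, GaloisField.card p k (Nat.succ_ne_zero _)]
    have h1 : n₀ < 2 ^ k := by
      calc n₀ ≤ n * 2 ^ n := hn₀le
        _ < k := Nat.lt_succ_self _
        _ < 2 ^ k := Nat.lt_two_pow_self
    have h2 : 2 ^ k ≤ p ^ k := Nat.pow_le_pow_left (Fact.out : p.Prime).two_le _
    exact_mod_cast le_of_lt (lt_of_lt_of_le h1 h2)
  -- find a good evaluation point
  have hex : ∃ w : Fin m × Fin n → K, MvPolynomial.eval w D ≠ 0 := by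
    by_contra hc
    push_neg at hc
    exact hD0 (hDhom.eq_zero_of_forall_eval_eq_zero_of_le_card hc hcard)
  obtain ⟨w, hwD⟩ := hex
  -- the representing matrix
  refine ⟨P.map (MvPolynomial.eval w), fun J => ⟨?_, ?_⟩⟩
  · -- linearly independent → partial transversal
    intro hLI
    set t : J → Finset (Fin m) :=
      fun j => Finset.univ.filter (fun i => (j : Fin n) ∈ A i) with ht
    have hall : ∀ s : Finset J, s.card ≤ (s.biUnion t).card := by
      intro s
      by_contra hlt
      push_neg at hlt
      have hli : LinearIndependent K
          (fun j : s => fun i : Fin m => (P.map (MvPolynomial.eval w)) i ((j : J) : Fin n)) :=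
        hLI.comp (Subtype.val : s → J) Subtype.val_injective
      have hsupp : ∀ (j : s) (i : Fin m), i ∉ s.biUnion t →
          (P.map (MvPolynomial.eval w)) i ((j : J) : Fin n) = 0 := by
        intro j i hi
        have hnt : i ∉ t (j : J) := fun hmem =>
          hi (Finset.mem_biUnion.mpr ⟨(j : J), j.2, hmem⟩)
        have hnA : ¬ (((j : J) : Fin n) ∈ A i) := by
          intro hA
          exact hnt (Finset.mem_filter.mpr ⟨Finset.mem_univ _, hA⟩)
        simp only [Matrix.map_apply, hP, Matrix.of_apply]
        rw [if_neg hnA, map_zero]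
      have hle := aux_card_le_of_supported _ _ hsupp hli
      rw [Fintype.card_coe] at hle
      omega
    obtain ⟨f, hfinj, hf⟩ :=
      (Finset.all_card_le_biUnion_card_iff_existsInjective' t).mp hall
    refine ⟨f, hfinj, fun x => ?_⟩
    have := hf x
    rw [ht] at this
    simpa using (Finset.mem_filter.mp this).2
  · -- partial transversal → linearly independent
    intro h
    obtain ⟨hinj, hmem⟩ := h.choose_spec
    apply aux_li_of_det _ h.choose
    have hmat : (Matrix.of fun i j : J =>
        (fun j : J => fun i : Fin m => (P.map (MvPolynomial.eval w)) i j) j (h.choose i))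
        = (P.submatrix h.choose (fun j : J => (j : Fin n))).map (MvPolynomial.eval w) := by
      ext i j
      rfl
    rw [hmat, ← RingHom.mapMatrix_apply, ← RingHom.map_det]
    -- the factor corresponding to `J` in `D` does not vanish at `w`
    have hfac : MvPolynomial.eval w
        (if h' : IsPartialTransversal A J then d J h'.choose else 1) ≠ 0 := by
      have : MvPolynomial.eval w D =
          ∏ J' : Finset (Fin n), MvPolynomial.eval w
            (if h' : IsPartialTransversal A J' then d J' h'.choose else 1) := by
        rw [hD, map_prod]
      rw [this, Finset.prod_ne_zero_iff] at hwD
      exact hwD J (Finset.mem_univ _)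
    rw [dif_pos h, hd] at hfac
    intro h0
    exact hfac (by rw [← h0])
end

section
/- Every transversal matroid can be represented by a matrix with integer entries. Precisely: for every finite set S = {a_1, …, a_n} and finite family 𝒜 = (A_1, …, A_m) of subsets of S, there exists an m × n matrix X with entries in ℤ such that, for every subset J of {1, …, n}, the columns of X indexed by J are linearly independent over ℚ if and only if {a_j : j ∈ J} is a partial transversal of 𝒜. -/
/-- A sum of integers, each of which is (up to sign) a power of two with pairwise
distinct exponents, is nonzero provided one term is nonzero. -/
lemma aux_sum_two_pow_ne_zero {ι : Type*} [Fintype ι] (F : ι → ℤ) (e : ι → ℕ)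
    (habs : ∀ x, F x ≠ 0 → |F x| = 2 ^ e x)
    (hinj : Function.Injective e)
    (x₀ : ι) (h₀ : F x₀ ≠ 0) : ∑ x, F x ≠ 0 := by
  classical
  have hTsum : ∑ x ∈ Finset.univ.filter (fun x => F x ≠ 0), F x = ∑ x, F x :=
    Finset.sum_filter_ne_zero _
  set T := Finset.univ.filter (fun x => F x ≠ 0) with hT
  have hx₀T : x₀ ∈ T := by simp [hT, h₀]
  obtain ⟨z, hzT, hmax⟩ := T.exists_max_image e ⟨x₀, hx₀T⟩
  have hFz : F z ≠ 0 := (Finset.mem_filter.1 hzT).2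
  have hsplit : F z + ∑ x ∈ T.erase z, F x = ∑ x ∈ T, F x :=
    Finset.add_sum_erase T F hzT
  have hb1 : |∑ x ∈ T.erase z, F x| ≤ ∑ x ∈ T.erase z, (2:ℤ) ^ e x := by
    refine (Finset.abs_sum_le_sum_abs _ _).trans (Finset.sum_le_sum fun x hx => ?_)
    exact le_of_eq (habs x (Finset.mem_filter.1 (Finset.mem_of_mem_erase hx)).2)
  have hb2 : ∑ x ∈ T.erase z, (2:ℤ) ^ e x = ∑ b ∈ (T.erase z).image e, (2:ℤ) ^ b :=
    (Finset.sum_image (fun x _ y _ h => hinj h)).symm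
  have hsubr : (T.erase z).image e ⊆ Finset.range (e z) := by
    intro b hb
    obtain ⟨x, hx, rfl⟩ := Finset.mem_image.1 hb
    refine Finset.mem_range.2 (lt_of_le_of_ne (hmax x (Finset.mem_of_mem_erase hx)) ?_)
    exact fun h => (Finset.ne_of_mem_erase hx) (hinj h)
  have hb3 : ∑ b ∈ (T.erase z).image e, (2:ℤ) ^ b ≤ ∑ b ∈ Finset.range (e z), (2:ℤ) ^ b :=
    Finset.sum_le_sum_of_subset_of_nonneg hsubr (fun _ _ _ => by positivity)
  have hgeom : ∑ b ∈ Finset.range (e z), (2:ℤ) ^ b = 2 ^ (e z) - 1 := by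
    have := geom_sum_mul (2:ℤ) (e z)
    simpa using this
  have habsz : |F z| = 2 ^ e z := habs z hFz
  intro hzero
  rw [← hTsum, ← hsplit] at hzero
  have heq : |F z| = |∑ x ∈ T.erase z, F x| := by
    rw [eq_neg_of_add_eq_zero_left hzero, abs_neg]
  rw [habsz] at heq
  have : (2:ℤ) ^ e z ≤ 2 ^ (e z) - 1 := by
    calc (2:ℤ) ^ e z = |∑ x ∈ T.erase z, F x| := heq
    _ ≤ ∑ x ∈ T.erase z, (2:ℤ) ^ e x := hb1
    _ = _ := hb2
    _ ≤ _ := hb3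
    _ = _ := hgeom
  linarith

/-- Every transversal matroid can be represented by a matrix with integer entries:
a set of (rationalized) columns is linearly independent over `ℚ` iff the
corresponding ground-set elements form a partial transversal. -/
theorem transversal_matroid_representable_int (n m : ℕ) (A : Fin m → Finset (Fin n)) :
    ∃ X : Matrix (Fin m) (Fin n) ℤ,
      ∀ J : Finset (Fin n),
        LinearIndependent ℚ (fun j : J => fun i : Fin m => (X i j : ℚ)) ↔
          IsPartialTransversal A J := by
  classical
  set pr : Fin m → Fin n → ℕ := fun i j => (finProdFinEquiv (i, j) : ℕ) with hpr
  have prinj : ∀ i i' j j', pr i j = pr i' j' → i = i' ∧ j = j' := by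
    intro i i' j j' h
    have h2 : finProdFinEquiv (i, j) = finProdFinEquiv (i', j') := Fin.val_injective h
    have h3 := finProdFinEquiv.injective h2
    exact ⟨congrArg Prod.fst h3, congrArg Prod.snd h3⟩
  set X : Matrix (Fin m) (Fin n) ℤ :=
    fun i j => if j ∈ A i then 2 ^ (2 ^ pr i j) else 0 with hX
  refine ⟨X, fun J => ⟨?_, ?_⟩⟩
  · -- linear independence implies partial transversal
    intro hli
    set t : {x // x ∈ J} → Finset (Fin m) :=
      fun x => Finset.univ.filter (fun i => (x : Fin n) ∈ A i) with ht
    have hall : ∀ s : Finset {x // x ∈ J}, s.card ≤ (s.biUnion t).card := by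
      intro s
      set N := s.biUnion t with hN
      have hsub : LinearIndependent ℚ
          (fun x : {y // y ∈ s} => fun i : Fin m => (X i ((x : {x // x ∈ J}) : Fin n) : ℚ)) :=
        hli.comp (fun x : {y // y ∈ s} => (x : {x // x ∈ J})) Subtype.val_injective
      have hG : LinearIndependent ℚ
          (fun x : {y // y ∈ s} => fun i : {i // i ∈ N} =>
            (X (i : Fin m) ((x : {x // x ∈ J}) : Fin n) : ℚ)) := by
        rw [Fintype.linearIndependent_iff] at hsub ⊢
        intro g hg
        apply hsub g
        funext i
        by_cases hiN : i ∈ N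
        · have := congrFun hg ⟨i, hiN⟩
          simpa using this
        · have hz : ∀ x : {y // y ∈ s}, (X i ((x : {x // x ∈ J}) : Fin n) : ℚ) = 0 := by
            intro x
            have hmem : ¬ (((x : {x // x ∈ J}) : Fin n) ∈ A i) := by
              intro hmem
              exact hiN (Finset.mem_biUnion.2 ⟨(x : {x // x ∈ J}), x.2, by simp [ht, hmem]⟩)
            simp [hX, hmem]
          simp [Finset.sum_apply, Pi.smul_apply, hz]
      have hcard := hG.fintype_card_le_finrank
      simpa [Module.finrank_pi, Fintype.card_coe] using hcard
    obtain ⟨f, finj, hf⟩ := (Finset.all_card_le_biUnion_card_iff_exists_injective t).mp hall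
    exact ⟨f, finj, fun x => by simpa [ht] using hf x⟩
  · -- partial transversal implies linear independence
    rintro ⟨φ, φinj, hφ⟩
    set M : Matrix {x // x ∈ J} {x // x ∈ J} ℤ :=
      fun x k => X (φ x) (k : Fin n) with hM
    have hdet : M.det ≠ 0 := by
      rw [Matrix.det_apply]
      refine aux_sum_two_pow_ne_zero _
        (fun σ => ∑ k : {x // x ∈ J}, 2 ^ pr (φ (σ k)) (k : Fin n)) ?_ ?_ (Equiv.refl _) ?_
      · -- absolute values
        intro σ hσ
        have hne : ∀ k, M (σ k) k ≠ 0 := by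
          intro k h0
          apply hσ
          exact smul_eq_zero_of_right _ (Finset.prod_eq_zero (Finset.mem_univ k) h0)
        have hval : ∀ k : {x // x ∈ J}, M (σ k) k = 2 ^ (2 ^ pr (φ (σ k)) (k : Fin n)) := by
          intro k
          by_cases hmem : (k : Fin n) ∈ A (φ (σ k))
          · simp [hM, hX, hmem]
          · exact absurd (by simp [hM, hX, hmem]) (hne k)
        have habs1 : |Equiv.Perm.sign σ • ∏ k, M (σ k) k| = |∏ k, M (σ k) k| := by
          rcases Int.units_eq_one_or (Equiv.Perm.sign σ) with h | h <;>
            simp [h, Units.smul_def, abs_neg]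
        rw [habs1, Finset.abs_prod]
        calc ∏ k, |M (σ k) k| = ∏ k : {x // x ∈ J}, 2 ^ (2 ^ pr (φ (σ k)) (k : Fin n)) := by
              refine Finset.prod_congr rfl fun k _ => ?_
              rw [hval k]
              exact abs_of_nonneg (by positivity)
          _ = 2 ^ ∑ k : {x // x ∈ J}, 2 ^ pr (φ (σ k)) (k : Fin n) :=
              Finset.prod_pow_eq_pow_sum _ _ _
      · -- injectivity of the exponent function
        intro σ τ h
        have hainj : ∀ ρ : Equiv.Perm {x // x ∈ J},
            Function.Injective (fun k : {x // x ∈ J} => pr (φ (ρ k)) (k : Fin n)) := by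
          intro ρ k k' hk
          exact Subtype.ext ((prinj _ _ _ _ hk).2)
        have hs : ∀ ρ : Equiv.Perm {x // x ∈ J},
            ∑ k : {x // x ∈ J}, 2 ^ pr (φ (ρ k)) (k : Fin n) =
              ∑ b ∈ Finset.univ.image (fun k : {x // x ∈ J} => pr (φ (ρ k)) (k : Fin n)),
                2 ^ b := fun ρ =>
          (Finset.sum_image (fun x _ y _ hxy => hainj ρ hxy)).symm
        simp only at h
        rw [hs σ, hs τ] at h
        have himg := Finset.geomSum_injective (le_refl 2) h
        ext k
        have hkmem : pr (φ (σ k)) (k : Fin n) ∈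
            Finset.univ.image (fun k : {x // x ∈ J} => pr (φ (τ k)) (k : Fin n)) := by
          rw [← himg]
          exact Finset.mem_image_of_mem _ (Finset.mem_univ k)
        obtain ⟨k', _, hk'⟩ := Finset.mem_image.1 hkmem
        obtain ⟨h1, h2⟩ := prinj _ _ _ _ hk'
        have hkk : k' = k := Subtype.ext h2
        subst hkk
        rw [φinj h1.symm]
      · -- the identity term is nonzero
        have : ∀ k : {x // x ∈ J}, M k k ≠ 0 := by
          intro k
          have := hφ k
          simp [hM, hX, this]
        simp only [Equiv.Perm.sign_refl, Equiv.refl_apply, one_smul]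
        exact Finset.prod_ne_zero_iff.2 fun k _ => this k
    have hdetQ : (M.map (Int.cast : ℤ → ℚ)).det ≠ 0 := by
      have hmap : (M.map (Int.cast : ℤ → ℚ)).det = ((M.det : ℤ) : ℚ) := by
        rw [show (Int.cast : ℤ → ℚ) = ⇑(Int.castRingHom ℚ) from rfl,
          ← RingHom.mapMatrix_apply, ← RingHom.map_det]
      rw [hmap]
      exact_mod_cast hdet
    have hunit : IsUnit (M.map (Int.cast : ℤ → ℚ)) :=
      (Matrix.isUnit_iff_isUnit_det _).2 (isUnit_iff_ne_zero.2 hdetQ)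
    have hcols : LinearIndependent ℚ (fun k => (M.map (Int.cast : ℤ → ℚ)).transpose k) :=
      Matrix.linearIndependent_cols_iff_isUnit.2 hunit
    refine LinearIndependent.of_comp (LinearMap.funLeft ℚ ℚ φ) ?_
    have heq : ((LinearMap.funLeft ℚ ℚ φ) ∘ fun j : J => fun i : Fin m => (X i (j : Fin n) : ℚ)) =
        fun k => (M.map (Int.cast : ℤ → ℚ)).transpose k := by
      funext k x
      simp [LinearMap.funLeft, Matrix.transpose_apply, Matrix.map_apply, hM]
      rfl
    rw [heq]
    exact hcols
end

section
/- Linearly independent columns of the incidence matrix of a set system always correspond to a partial transversal. Precisely: let S = {a_1, …, a_n} be a finite set, 𝒜 = (A_1, …, A_m) a family of subsets of S, K a field, and X the m × n matrix over K whose (i,j) entry is 1 if a_j ∈ A_i and 0 otherwise. If J ⊆ {1, …, n} is such that the columns of X indexed by J are linearly independent over K, then {a_j : j ∈ J} is a partial transversal of 𝒜. -/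
/-- Linearly independent columns of the incidence matrix of a set system always
correspond to a partial transversal (over any field). -/
theorem linearIndependent_incidence_columns_isPartialTransversal
    (n m : ℕ) (A : Fin m → Finset (Fin n))
    (K : Type*) [Field K]
    (X : Matrix (Fin m) (Fin n) K)
    (hX : ∀ i j, X i j = if j ∈ A i then 1 else 0)
    (J : Finset (Fin n))
    (hJ : LinearIndependent K (fun j : J => fun i : Fin m => X i j)) :
    IsPartialTransversal A J := by
  classical
  set t : J → Finset (Fin m) := fun x => Finset.univ.filter (fun i => (x : Fin n) ∈ A i) with ht
  have hall : ∀ s : Finset J, s.card ≤ (s.biUnion t).card := by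
    intro s
    set B := s.biUnion t with hB
    -- columns indexed by s, restricted to coordinates in B
    set v : s → (B → K) := fun j i => X i (j : Fin n) with hv
    have hvind : LinearIndependent K v := by
      rw [Fintype.linearIndependent_iff]
      intro g hg
      -- extend g by zero to J
      set g' : J → K := fun j => if h : j ∈ s then g ⟨j, h⟩ else 0 with hg'
      have hzero : ∑ j : J, g' j • (fun i : Fin m => X i j) = 0 := by
        funext i
        by_cases hi : i ∈ B
        · have h0 := congrFun hg ⟨i, hi⟩
          simp only [Finset.sum_apply, Pi.smul_apply, Pi.zero_apply, smul_eq_mul, hv] at h0 ⊢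
          have h1 : ∑ j : J, g' j * X i ↑j = ∑ j ∈ s, g' j * X i ↑j :=
            (Finset.sum_subset (Finset.subset_univ s) (fun j _ hj => by
              simp [hg', hj])).symm
          have h2 : ∑ j ∈ s, g' j * X i ↑j = ∑ j ∈ s.attach, g' ↑j * X i ↑(↑j : J) :=
            (Finset.sum_attach s _).symm
          rw [h1, h2, ← h0]
          apply Finset.sum_congr rfl
          intro j _
          simp [hg', j.2]
        · simp only [Finset.sum_apply, Pi.smul_apply, Pi.zero_apply, smul_eq_mul]
          apply Finset.sum_eq_zero
          intro j _
          rcases eq_or_ne (g' j) 0 with h0 | h0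
          · rw [h0, zero_mul]
          · have hjs : j ∈ s := by
              by_contra hjs
              simp [hg', hjs] at h0
            have : X i (j : Fin n) = 0 := by
              rw [hX]
              rw [if_neg]
              intro hmem
              exact hi (Finset.mem_biUnion.mpr ⟨j, hjs, by simp [ht, hmem]⟩)
            rw [this, mul_zero]
      have hg0 : ∀ j : J, g' j = 0 := Fintype.linearIndependent_iff.mp hJ g' hzero
      intro j
      have := hg0 j
      simpa [hg', j.2] using this
    have hcard : Fintype.card s ≤ Module.finrank K (B → K) :=
      hvind.fintype_card_le_finrank
    simpa using hcard
  obtain ⟨f, hf, hft⟩ := (Finset.all_card_le_biUnion_card_iff_exists_injective t).mp hall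
  refine ⟨f, hf, fun x => ?_⟩
  have := hft x
  simpa [ht] using this
end
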